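/- Suppose the Green operator satisfies Σ_{j=0}^∞ ‖G(k,j+1)‖·γ(j) ≤ q < 1 for every k, f satisfies |f(k,y) - f(k,ỹ)| ≤ γ(k)|y - ỹ|, and x(·,m,ξ) is a fixed solution sequence. Then the operator Θ on ℓ^∞(ℕ, ℝ^d) defined by (Θφ)(k) = Σ_{j=0}^∞ G(k,j+1)·f(j, x(j,m,ξ) + φ(j)) is a contraction with Lipschitz constant at most q < 1, and hence has a unique fixed point z* ∈ ℓ^∞(ℕ, ℝ^d). -/

import Mathlib

open scoped NNReal BoundedContinuousFunction

/-- If `Σ_j ‖G(k,j+1)‖γ(j) ≤ q < 1` for every `k`, `f` is `γ`-Lipschitz and `μ`-bounded in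
the second variable with `Σ_j ‖G(k,j+1)‖μ(j) ≤ p < ∞`, then the operator
`(Θφ)(k) = Σ_j G(k,j+1)·f(j, x(j)+φ(j))` on `ℓ^∞(ℕ,ℝ^d)` is a `q`-contraction and has a
unique fixed point. -/
theorem theta_contraction_fixed_point {d : ℕ}
    (G : ℕ → ℕ → (EuclideanSpace ℝ (Fin d) →L[ℝ] EuclideanSpace ℝ (Fin d)))
    (f : ℕ → EuclideanSpace ℝ (Fin d) → EuclideanSpace ℝ (Fin d))
    (γ μ : ℕ → ℝ) (q p : ℝ≥0) (hq : q < 1)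
    (hlip : ∀ (k : ℕ) (y y' : EuclideanSpace ℝ (Fin d)),
      ‖f k y - f k y'‖ ≤ γ k * ‖y - y'‖)
    (hbound : ∀ (k : ℕ) (y : EuclideanSpace ℝ (Fin d)), ‖f k y‖ ≤ μ k)
    (hGγs : ∀ k : ℕ, Summable (fun j : ℕ => ‖G k (j + 1)‖ * γ j))
    (hGγ : ∀ k : ℕ, (∑' j : ℕ, ‖G k (j + 1)‖ * γ j) ≤ q)
    (hGμs : ∀ k : ℕ, Summable (fun j : ℕ => ‖G k (j + 1)‖ * μ j))
    (hGμ : ∀ k : ℕ, (∑' j : ℕ, ‖G k (j + 1)‖ * μ j) ≤ p)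
    (x : ℕ → EuclideanSpace ℝ (Fin d))
    (Θ : (ℕ →ᵇ EuclideanSpace ℝ (Fin d)) → (ℕ →ᵇ EuclideanSpace ℝ (Fin d)))
    (hΘ : ∀ (φ : ℕ →ᵇ EuclideanSpace ℝ (Fin d)) (k : ℕ),
      Θ φ k = ∑' j : ℕ, G k (j + 1) (f j (x j + φ j))) :
    LipschitzWith q Θ ∧ ∃! z : ℕ →ᵇ EuclideanSpace ℝ (Fin d), Θ z = z := by
  have hlipW : LipschitzWith q Θ := by
    rcases Nat.eq_zero_or_pos d with hd | hd
    · subst hd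
      haveI : Subsingleton (EuclideanSpace ℝ (Fin 0)) :=
        ⟨fun a b => by ext i; exact Fin.elim0 i⟩
      haveI : Subsingleton (ℕ →ᵇ EuclideanSpace ℝ (Fin 0)) :=
        ⟨fun a b => BoundedContinuousFunction.ext fun n => Subsingleton.elim _ _⟩
      intro a b
      simp [Subsingleton.elim (Θ a) (Θ b)]
    · -- γ is nonneg
      have hγ : ∀ j, 0 ≤ γ j := by
        intro j
        have h := hlip j (EuclideanSpace.single ⟨0, hd⟩ (1 : ℝ)) 0
        rw [sub_zero, EuclideanSpace.norm_single, norm_one, mul_one] at h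
        exact le_trans (norm_nonneg _) h
      apply LipschitzWith.of_dist_le_mul
      intro φ ψ
      have hD : (0 : ℝ) ≤ q * dist φ ψ := by positivity
      refine BoundedContinuousFunction.dist_le hD |>.2 fun k => ?_
      -- summability of the two series
      have hs : ∀ (χ : ℕ →ᵇ EuclideanSpace ℝ (Fin d)),
          Summable (fun j : ℕ => G k (j + 1) (f j (x j + χ j))) := by
        intro χ
        apply Summable.of_norm
        apply Summable.of_nonneg_of_le (fun j => norm_nonneg _) _ (hGμs k)
        intro j
        calc ‖G k (j + 1) (f j (x j + χ j))‖
            ≤ ‖G k (j + 1)‖ * ‖f j (x j + χ j)‖ := (G k (j + 1)).le_opNorm _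
          _ ≤ ‖G k (j + 1)‖ * μ j := by
              exact mul_le_mul_of_nonneg_left (hbound j _) (norm_nonneg _)
      have hterm : ∀ j : ℕ,
          ‖G k (j + 1) (f j (x j + φ j)) - G k (j + 1) (f j (x j + ψ j))‖
            ≤ ‖G k (j + 1)‖ * γ j * dist φ ψ := by
        intro j
        calc ‖G k (j + 1) (f j (x j + φ j)) - G k (j + 1) (f j (x j + ψ j))‖
            = ‖G k (j + 1) ((f j (x j + φ j)) - (f j (x j + ψ j)))‖ := by
              rw [map_sub]
          _ ≤ ‖G k (j + 1)‖ * ‖f j (x j + φ j) - f j (x j + ψ j)‖ :=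
              (G k (j + 1)).le_opNorm _
          _ ≤ ‖G k (j + 1)‖ * (γ j * ‖(x j + φ j) - (x j + ψ j)‖) :=
              mul_le_mul_of_nonneg_left (hlip j _ _) (norm_nonneg _)
          _ = ‖G k (j + 1)‖ * γ j * ‖φ j - ψ j‖ := by
              rw [add_sub_add_left_eq_sub]; ring
          _ ≤ ‖G k (j + 1)‖ * γ j * dist φ ψ := by
              apply mul_le_mul_of_nonneg_left _
                (mul_nonneg (norm_nonneg _) (hγ j))
              rw [← dist_eq_norm]
              exact BoundedContinuousFunction.dist_coe_le_dist j
      have hsn : Summable (fun j : ℕ =>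
          ‖G k (j + 1) (f j (x j + φ j)) - G k (j + 1) (f j (x j + ψ j))‖) := by
        apply Summable.of_nonneg_of_le (fun j => norm_nonneg _) hterm
        exact (hGγs k).mul_right _
      calc dist (Θ φ k) (Θ ψ k)
          = ‖(∑' j : ℕ, G k (j + 1) (f j (x j + φ j))) -
              (∑' j : ℕ, G k (j + 1) (f j (x j + ψ j)))‖ := by
            rw [dist_eq_norm, hΘ, hΘ]
        _ = ‖∑' j : ℕ, (G k (j + 1) (f j (x j + φ j)) -
              G k (j + 1) (f j (x j + ψ j)))‖ := by
            rw [Summable.tsum_sub (hs φ) (hs ψ)]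
        _ ≤ ∑' j : ℕ, ‖G k (j + 1) (f j (x j + φ j)) -
              G k (j + 1) (f j (x j + ψ j))‖ := norm_tsum_le_tsum_norm hsn
        _ ≤ ∑' j : ℕ, ‖G k (j + 1)‖ * γ j * dist φ ψ :=
            Summable.tsum_le_tsum hterm hsn ((hGγs k).mul_right _)
        _ = (∑' j : ℕ, ‖G k (j + 1)‖ * γ j) * dist φ ψ := by
            rw [tsum_mul_right]
        _ ≤ q * dist φ ψ := by
            exact mul_le_mul_of_nonneg_right (hGγ k) dist_nonneg
  haveI : Nonempty (ℕ →ᵇ EuclideanSpace ℝ (Fin d)) := ⟨0⟩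
  have hc : ContractingWith q Θ := ⟨hq, hlipW⟩
  exact ⟨hlipW, hc.fixedPoint Θ, hc.fixedPoint_isFixedPt,
    fun z hz => hc.fixedPoint_unique hz⟩
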